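/- Suppose C ≥ 1, K ≥ 1, μ₁ > 0, μ₂ ≥ 0 satisfy C ≤ C^{1 - 1/K} μ₁ + μ₂. Then C ≤ (μ₁ + μ₂)^K; and if additionally (1 - 1/K)μ₁ < 1, then C ≤ (μ₁/K + μ₂)/(1 - μ₁(1 - 1/K)). -/

import Mathlib

theorem stmt19 (C K μ₁ μ₂ : ℝ) (hC : 1 ≤ C) (hK : 1 ≤ K) (hμ₁ : 0 < μ₁)
    (hμ₂ : 0 ≤ μ₂) (h : C ≤ C ^ (1 - 1 / K) * μ₁ + μ₂) :
    C ≤ (μ₁ + μ₂) ^ K ∧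
    ((1 - 1 / K) * μ₁ < 1 → C ≤ (μ₁ / K + μ₂) / (1 - μ₁ * (1 - 1 / K))) := by
  have hK0 : 0 < K := lt_of_lt_of_le one_pos hK
  have ht0 : 0 ≤ 1 - 1 / K := by
    have : 1 / K ≤ 1 := by rw [div_le_one hK0]; exact hK
    linarith
  have ht1 : 1 - 1 / K ≤ 1 := by
    have : (0:ℝ) ≤ 1 / K := by positivity
    linarith
  have hC0 : 0 < C := lt_of_lt_of_le one_pos hC
  have hCt1 : (1:ℝ) ≤ C ^ (1 - 1 / K) := Real.one_le_rpow hC ht0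
  constructor
  · have h1 : C ≤ C ^ (1 - 1 / K) * (μ₁ + μ₂) := by
      nlinarith [mul_le_mul_of_nonneg_right hCt1 hμ₂]
    have h2 : C ^ (1 / K) ≤ μ₁ + μ₂ := by
      have hsplit : C ^ (1 - 1 / K) * C ^ (1 / K) = C := by
        rw [← Real.rpow_add hC0]; norm_num
      nth_rewrite 1 [← hsplit] at h1
      exact le_of_mul_le_mul_left h1 (Real.rpow_pos_of_pos hC0 _)
    have key : (C ^ (1 / K)) ^ K ≤ (μ₁ + μ₂) ^ K :=
      Real.rpow_le_rpow (Real.rpow_nonneg hC0.le _) h2 hK0.le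
    rwa [← Real.rpow_mul hC0.le, one_div_mul_cancel (ne_of_gt hK0),
      Real.rpow_one] at key
  · intro hlt
    have hBern : C ^ (1 - 1 / K) ≤ 1 + (1 - 1 / K) * (C - 1) := by
      have := rpow_one_add_le_one_add_mul_self (s := C - 1) (by linarith) ht0 ht1
      simpa using this
    have hnum : C * (1 - μ₁ * (1 - 1 / K)) ≤ μ₁ / K + μ₂ := by
      have h1 : C ≤ (1 + (1 - 1 / K) * (C - 1)) * μ₁ + μ₂ :=
        h.trans (by nlinarith)
      have hμK : μ₁ / K = (1 - (1 - 1 / K)) * μ₁ := by field_simp; ring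
      nlinarith
    rw [le_div_iff₀ (by linarith)]
    exact hnum
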